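/- Let γ⁰, γ¹, γ² be the standard 2x2 Dirac matrices in 1+2 dimensions (satisfying the Clifford relations with η = diag(-1,1,1) and (γ⁰)* = γ⁰, (γᵃ)* = -γᵃ), and let Ψ, Φ ∈ ℂ². With Ψ₊ := Ψ + (x_a/t)γ⁰γᵃΨ as before (t > 0, x ∈ ℝ²), the analogous decomposition for the vector component fails to gain smallness: (Ψ₊)* Φ₊ = Ψ*Φ + (|x|²/t²)Ψ*Φ + (x_a/t)(Ψ*γ⁰γᵃΦ + Ψ*(γ⁰γᵃ)*Φ) = (1 + |x|²/t²)Ψ*Φ + 2(x_a/t)Ψ*γ⁰γᵃΦ; in particular the coefficient of Ψ*Φ is 1 + |x|²/t² rather than s²/t² = 1 - |x|²/t². -/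

import Mathlib

open Matrix

noncomputable section

abbrev M2 := Matrix (Fin 2) (Fin 2) ℂ

/-- The Minkowski metric η = diag(-1, 1, 1). -/
def η : Fin 3 → Fin 3 → ℝ := fun μ ν =>
  if μ = ν then (if μ = 0 then -1 else 1) else 0

/-- The interaction Ψ*Ψ (without γ⁰) fails to gain smallness: the coefficient of
Ψ*Φ in (Ψ₊)*Φ₊ is 1 + |x|²/t² rather than s²/t² = 1 - |x|²/t². -/
theorem no_hidden_structure_for_vector_component
    (γ : Fin 3 → M2)
    (hClif : ∀ μ ν : Fin 3, γ μ * γ ν + γ ν * γ μ = (-2 * (η μ ν : ℂ)) • (1 : M2))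
    (h0 : (γ 0)ᴴ = γ 0) (ha : ∀ a : Fin 2, (γ a.succ)ᴴ = -(γ a.succ))
    (Ψ Φ : Fin 2 → ℂ) (t : ℝ) (ht : 0 < t) (x : Fin 2 → ℝ) :
    star (Ψ + ∑ a : Fin 2, ((x a / t : ℝ) : ℂ) • (γ 0 * γ a.succ).mulVec Ψ) ⬝ᵥ
        (Φ + ∑ a : Fin 2, ((x a / t : ℝ) : ℂ) • (γ 0 * γ a.succ).mulVec Φ)
      = ((1 + (x 0 ^ 2 + x 1 ^ 2) / t ^ 2 : ℝ) : ℂ) * (star Ψ ⬝ᵥ Φ)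
        + 2 * ∑ a : Fin 2, ((x a / t : ℝ) : ℂ) *
            (star Ψ ⬝ᵥ (γ 0 * γ a.succ).mulVec Φ) := by
  -- basic Clifford facts, with literal indices in Fin 3
  have half : ∀ M N : M2, M + M = N + N → M = N := by
    intro M N h
    have h2 : (2:ℂ) • M = (2:ℂ) • N := by rw [two_smul, two_smul]; exact h
    exact smul_right_injective M2 (two_ne_zero) h2
  have h00 : γ 0 * γ 0 = 1 := by
    have h := hClif 0 0
    simp [η] at h
    exact half _ _ (by rw [h, two_smul])
  have h11 : γ 1 * γ 1 = -1 := by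
    have h := hClif 1 1
    simp [η] at h
    exact half _ _ (by rw [h, two_smul, neg_add])
  have h22 : γ 2 * γ 2 = -1 := by
    have h := hClif 2 2
    simp [η] at h
    exact half _ _ (by rw [h, two_smul, neg_add])
  have h01 : γ 1 * γ 0 = -(γ 0 * γ 1) := by
    have h := hClif 0 1
    simp [η] at h
    linear_combination (norm := noncomm_ring) h
  have h02 : γ 2 * γ 0 = -(γ 0 * γ 2) := by
    have h := hClif 0 2
    simp [η] at h
    linear_combination (norm := noncomm_ring) h
  have h12 : γ 2 * γ 1 = -(γ 1 * γ 2) := by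
    have h := hClif 1 2
    simp [η] at h
    linear_combination (norm := noncomm_ring) h
  set A : Fin 2 → M2 := fun a => γ 0 * γ a.succ with hA
  have hA0 : A 0 = γ 0 * γ 1 := rfl
  have hA1 : A 1 = γ 0 * γ 2 := rfl
  have hAherm0 : (A 0)ᴴ = A 0 := by
    rw [show A 0 = γ 0 * γ (0:Fin 2).succ from rfl, conjTranspose_mul, h0, ha 0]
    show -γ 1 * γ 0 = γ 0 * γ 1
    rw [neg_mul, h01, neg_neg]
  have hAherm1 : (A 1)ᴴ = A 1 := by
    rw [show A 1 = γ 0 * γ (1:Fin 2).succ from rfl, conjTranspose_mul, h0, ha 1]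
    show -γ 2 * γ 0 = γ 0 * γ 2
    rw [neg_mul, h02, neg_neg]
  have hAA0 : A 0 * A 0 = 1 := by
    rw [hA0]
    calc γ 0 * γ 1 * (γ 0 * γ 1) = γ 0 * (γ 1 * γ 0) * γ 1 := by noncomm_ring
        _ = γ 0 * (-(γ 0 * γ 1)) * γ 1 := by rw [h01]
        _ = -(γ 0 * γ 0 * (γ 1 * γ 1)) := by noncomm_ring
        _ = 1 := by rw [h00, h11]; simp
  have hAA1 : A 1 * A 1 = 1 := by
    rw [hA1]
    calc γ 0 * γ 2 * (γ 0 * γ 2) = γ 0 * (γ 2 * γ 0) * γ 2 := by noncomm_ring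
        _ = γ 0 * (-(γ 0 * γ 2)) * γ 2 := by rw [h02]
        _ = -(γ 0 * γ 0 * (γ 2 * γ 2)) := by noncomm_ring
        _ = 1 := by rw [h00, h22]; simp
  have hA01 : A 0 * A 1 = -(A 1 * A 0) := by
    rw [hA0, hA1]
    calc γ 0 * γ 1 * (γ 0 * γ 2) = γ 0 * (γ 1 * γ 0) * γ 2 := by noncomm_ring
      _ = γ 0 * (-(γ 0 * γ 1)) * γ 2 := by rw [h01]
      _ = -(γ 0 * γ 0 * (γ 1 * γ 2)) := by noncomm_ring
      _ = -(γ 1 * γ 2) := by rw [h00]; simp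
      _ = γ 2 * γ 1 := by rw [h12]
      _ = γ 0 * γ 0 * (γ 2 * γ 1) := by rw [h00]; simp
      _ = γ 0 * (γ 0 * γ 2) * γ 1 := by noncomm_ring
      _ = γ 0 * (-(γ 2 * γ 0)) * γ 1 := by rw [h02]; simp
      _ = -(γ 0 * γ 2 * (γ 0 * γ 1)) := by noncomm_ring
  -- scalar abbreviations
  set c : Fin 2 → ℂ := fun a => ((x a / t : ℝ) : ℂ) with hc
  have hstarc : ∀ a, star (c a) = c a := by
    intro a; simp [hc, Complex.star_def, Complex.conj_ofReal]
  have key : ∀ (M : M2) (v w : Fin 2 → ℂ), Mᴴ = M →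
      star (M.mulVec v) ⬝ᵥ w = star v ⬝ᵥ M.mulVec w := by
    intro M v w hM
    rw [star_mulVec, hM, ← dotProduct_mulVec]
  simp only [Fin.sum_univ_two]
  rw [star_add, star_add, star_smul, star_smul, hstarc, hstarc]
  rw [show γ 0 * γ (0:Fin 2).succ = A 0 from rfl, show γ 0 * γ (1:Fin 2).succ = A 1 from rfl,
    show ((x 0 / t : ℝ) : ℂ) = c 0 from rfl, show ((x 1 / t : ℝ) : ℂ) = c 1 from rfl]
  simp only [add_dotProduct, dotProduct_add, smul_dotProduct, dotProduct_smul,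
    key (A 0) Ψ _ hAherm0, key (A 1) Ψ _ hAherm1]
  have hdot : ∀ (M N : M2), star Ψ ⬝ᵥ M.mulVec (N.mulVec Φ) = star Ψ ⬝ᵥ (M * N).mulVec Φ := by
    intro M N; rw [← mulVec_mulVec]
  rw [hdot (A 0) (A 0), hdot (A 0) (A 1), hdot (A 1) (A 0), hdot (A 1) (A 1),
    hAA0, hAA1, hA01, one_mulVec]
  have hcast : ((1 + (x 0 ^ 2 + x 1 ^ 2) / t ^ 2 : ℝ) : ℂ)
      = 1 + c 0 ^ 2 + c 1 ^ 2 := by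
    simp only [hc]
    have ht' : (t:ℝ) ≠ 0 := ne_of_gt ht
    push_cast
    field_simp
    ring
  rw [hcast]
  simp only [smul_eq_mul, neg_mulVec, dotProduct_neg]
  ring
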